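/- arXiv:2503.22546 — 3 statements merged into one kernel-verified Lean document; each statement's English description precedes it below -/
import Mathlib

section
/- Every compact Hausdorff zero-dimensional topological semigroup is residually finite: if S is a semigroup with a compact Hausdorff topology having a basis of clopen sets, and multiplication S × S → S is continuous, then for all x, y ∈ S with x ≠ y there exist a finite semigroup F, regarded as a discrete topological space, and a continuous semigroup homomorphism φ : S → F with φ(x) ≠ φ(y). (Numakura's theorem: Stone topological semigroups are profinite.) -/
open Set TopologicalSpace

/-- The syntactic congruence of a subset `U` of a semigroup. -/
def synCon (S : Type) [Semigroup S] (U : Set S) : Con S where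
  r s t := (s ∈ U ↔ t ∈ U) ∧ (∀ u, u * s ∈ U ↔ u * t ∈ U) ∧
      (∀ v, s * v ∈ U ↔ t * v ∈ U) ∧ (∀ u v, u * s * v ∈ U ↔ u * t * v ∈ U)
  iseqv := by
    refine ⟨fun s => ⟨Iff.rfl, fun _ => Iff.rfl, fun _ => Iff.rfl, fun _ _ => Iff.rfl⟩,
      fun h => ⟨h.1.symm, fun u => (h.2.1 u).symm, fun v => (h.2.2.1 v).symm,
        fun u v => (h.2.2.2 u v).symm⟩,
      fun h h' => ⟨h.1.trans h'.1, fun u => (h.2.1 u).trans (h'.2.1 u),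
        fun v => (h.2.2.1 v).trans (h'.2.2.1 v),
        fun u v => (h.2.2.2 u v).trans (h'.2.2.2 u v)⟩⟩
  mul' := by
    rintro w x y z h h'
    refine ⟨(h.2.2.1 y).trans (h'.2.1 x), ?_, ?_, ?_⟩
    · intro u
      rw [← mul_assoc, ← mul_assoc]
      exact (h.2.2.2 u y).trans (h'.2.1 (u * x))
    · intro v
      calc (w * y * v ∈ U) ↔ w * (y * v) ∈ U := by rw [mul_assoc]
        _ ↔ x * (y * v) ∈ U := h.2.2.1 (y * v)
        _ ↔ x * y * v ∈ U := by rw [mul_assoc]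
        _ ↔ x * z * v ∈ U := h'.2.2.2 x v
    · intro u v
      calc (u * (w * y) * v ∈ U) ↔ u * w * (y * v) ∈ U := by
            rw [mul_assoc u (w * y) v, mul_assoc w y v, ← mul_assoc u w (y * v)]
        _ ↔ u * x * (y * v) ∈ U := h.2.2.2 u (y * v)
        _ ↔ u * x * y * v ∈ U := by rw [mul_assoc (u * x) y v]
        _ ↔ u * x * z * v ∈ U := h'.2.2.2 (u * x) v
        _ ↔ u * (x * z) * v ∈ U := by rw [mul_assoc u x z]

/-- Core compactness lemma: for a clopen `U` and a jointly continuous family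
`f : K → S → S` with `K` compact, agreement of `t` with `s` in all contexts `f k`
holds on a neighborhood of `s`. -/
lemma tube_core {K S : Type} [TopologicalSpace K] [TopologicalSpace S]
    [CompactSpace K] {f : K → S → S} (hf : Continuous fun p : K × S => f p.1 p.2)
    {U : Set S} (hU : IsClopen U) (s : S) :
    ∃ B : Set S, IsOpen B ∧ s ∈ B ∧ ∀ t ∈ B, ∀ k, (f k t ∈ U ↔ f k s ∈ U) := by
  set V : Set (K × S) := (fun p : K × S => f p.1 p.2) ⁻¹' U with hVdef
  have hVo : IsOpen V := hU.2.preimage hf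
  have hVc : IsClosed V := hU.1.preimage hf
  have hcont : Continuous fun k : K => f k s :=
    hf.comp (continuous_id.prodMk continuous_const)
  set C : Set K := {k | f k s ∈ U} with hCdef
  have hCcl : IsClosed C := hU.1.preimage hcont
  have hCo : IsOpen C := hU.2.preimage hcont
  have hCcomp : IsCompact C := hCcl.isCompact
  have hCcC : IsCompact Cᶜ := hCo.isClosed_compl.isCompact
  have h1 : C ×ˢ ({s} : Set S) ⊆ V := by
    rintro ⟨k, t⟩ ⟨hk, ht⟩
    rcases ht with rfl
    exact hk
  have h2 : Cᶜ ×ˢ ({s} : Set S) ⊆ Vᶜ := by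
    rintro ⟨k, t⟩ ⟨hk, ht⟩
    rcases ht with rfl
    exact hk
  obtain ⟨u1, B1, hu1, hB1, hCu1, hsB1, hsub1⟩ :=
    generalized_tube_lemma hCcomp isCompact_singleton hVo h1
  obtain ⟨u2, B2, hu2, hB2, hCu2, hsB2, hsub2⟩ :=
    generalized_tube_lemma hCcC isCompact_singleton hVc.isOpen_compl h2
  refine ⟨B1 ∩ B2, hB1.inter hB2, ⟨hsB1 rfl, hsB2 rfl⟩, ?_⟩
  rintro t ⟨ht1, ht2⟩ k
  by_cases hk : k ∈ C
  · have : (k, t) ∈ V := hsub1 ⟨hCu1 hk, ht1⟩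
    exact ⟨fun _ => hk, fun _ => this⟩
  · have : (k, t) ∈ Vᶜ := hsub2 ⟨hCu2 hk, ht2⟩
    exact ⟨fun h => absurd h this, fun h => absurd h hk⟩

/-- Each class of the syntactic congruence of a clopen set is open. -/
lemma synCon_class_isOpen (S : Type) [Semigroup S] [TopologicalSpace S] [CompactSpace S]
    (hmul : Continuous fun p : S × S => p.1 * p.2)
    {U : Set S} (hU : IsClopen U) (s : S) :
    ∃ B : Set S, IsOpen B ∧ s ∈ B ∧ ∀ t ∈ B, synCon S U s t := by
  classical
  -- left contexts
  obtain ⟨B1, hB1o, hsB1, hB1⟩ := tube_core (f := fun u t => u * t) hmul hU s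
  -- right contexts
  obtain ⟨B2, hB2o, hsB2, hB2⟩ :=
    tube_core (f := fun v t => t * v)
      (hmul.comp (continuous_snd.prodMk continuous_fst)) hU s
  -- two-sided contexts
  obtain ⟨B3, hB3o, hsB3, hB3⟩ :=
    tube_core (K := S × S) (f := fun p t => p.1 * t * p.2)
      (by
        have c1 : Continuous fun q : (S × S) × S => q.1.1 * q.2 :=
          hmul.comp ((continuous_fst.comp continuous_fst).prodMk continuous_snd)
        have c2 : Continuous fun q : (S × S) × S => q.1.2 :=
          continuous_snd.comp continuous_fst
        exact hmul.comp (c1.prodMk c2)) hU s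
  -- empty context
  set B0 : Set S := if s ∈ U then U else Uᶜ with hB0def
  have hB0o : IsOpen B0 := by
    by_cases h : s ∈ U <;> simp [hB0def, h, hU.2, hU.1.isOpen_compl]
  have hsB0 : s ∈ B0 := by
    by_cases h : s ∈ U <;> simp [hB0def, h]
  refine ⟨B0 ∩ (B1 ∩ (B2 ∩ B3)), hB0o.inter (hB1o.inter (hB2o.inter hB3o)),
    ⟨hsB0, hsB1, hsB2, hsB3⟩, ?_⟩
  rintro t ⟨ht0, ht1, ht2, ht3⟩
  refine ⟨?_, fun u => (hB1 t ht1 u).symm, fun v => (hB2 t ht2 v).symm,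
    fun u v => (hB3 t ht3 (u, v)).symm⟩
  by_cases h : s ∈ U
  · simp only [hB0def, if_pos h] at ht0
    exact ⟨fun _ => ht0, fun _ => h⟩
  · simp only [hB0def, if_neg h] at ht0
    exact ⟨fun hs => absurd hs h, fun ht => absurd ht ht0⟩

/-- **Numakura's theorem.** Every compact Hausdorff zero-dimensional topological
semigroup is residually finite: distinct points are separated by a continuous
homomorphism onto a finite (discrete) semigroup. -/
theorem stone_topological_semigroup_residually_finite
    (S : Type) [Semigroup S] [TopologicalSpace S] [CompactSpace S] [T2Space S]
    (hbasis : TopologicalSpace.IsTopologicalBasis {U : Set S | IsClopen U})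
    (hmul : Continuous fun p : S × S => p.1 * p.2)
    (x y : S) (hxy : x ≠ y) :
    ∃ (F : Type) (_ : Semigroup F) (_ : Finite F) (φ : S →ₙ* F),
      @Continuous S F _ ⊥ (⇑φ) ∧ φ x ≠ φ y := by
  -- find a clopen set separating x and y
  obtain ⟨o1, o2, ho1, ho2, hx1, hy2, hdisj⟩ := t2_separation hxy
  obtain ⟨U, hUb, hxU, hUo1⟩ := hbasis.exists_subset_of_mem_open hx1 ho1
  have hU : IsClopen U := hUb
  have hyU : y ∉ U := fun h => hdisj.ne_of_mem (hUo1 h) hy2 rfl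
  -- the syntactic congruence
  set c : Con S := synCon S U with hc
  -- each class has an open neighborhood basis, so classes are open
  have hclass : ∀ s : S, IsOpen {t | c s t} := by
    intro s
    rw [isOpen_iff_forall_mem_open]
    intro t ht
    obtain ⟨B, hBo, htB, hB⟩ := synCon_class_isOpen S hmul hU t
    exact ⟨B, fun t' ht' => c.trans ht (hB t' ht'), hBo, htB⟩
  -- finiteness of the quotient
  have hfin : Finite c.Quotient := by
    have hcover : (univ : Set S) ⊆ ⋃ s : S, {t | c s t} :=
      fun s _ => mem_iUnion.mpr ⟨s, c.refl s⟩
    obtain ⟨T, hT⟩ := isCompact_univ.elim_finite_subcover _ hclass hcover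
    refine Finite.of_surjective (fun t : T => ((t : S) : c.Quotient)) ?_
    rintro ⟨s⟩
    obtain ⟨t, htT, hst⟩ : ∃ t ∈ T, c t s := by
      have := hT (mem_univ s)
      simpa using this
    exact ⟨⟨t, htT⟩, c.eq.mpr hst⟩
  -- continuity of the quotient map into the discrete topology
  have hcont : @Continuous S c.Quotient _ ⊥ (fun s : S => (s : c.Quotient)) := by
    rw [continuous_def]
    intro A _
    have hpre : (fun s : S => (s : c.Quotient)) ⁻¹' A =
        ⋃ (s : S) (_ : (s : c.Quotient) ∈ A), {t | c s t} := by
      ext t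
      simp only [mem_preimage, mem_iUnion, mem_setOf_eq]
      constructor
      · intro ht
        exact ⟨t, ht, c.refl t⟩
      · rintro ⟨s, hs, hst⟩
        rwa [← c.eq.mpr hst]
    rw [hpre]
    exact isOpen_iUnion fun s => isOpen_iUnion fun _ => hclass s
  refine ⟨c.Quotient, inferInstance, hfin,
    ⟨fun s => (s : c.Quotient), fun a b => rfl⟩, hcont, ?_⟩
  -- separation
  intro h
  have hxy' : c x y := c.eq.mp h
  exact hyU (hxy'.1.mp hxU)
end

section
/- Every nonempty compact Hausdorff topological semigroup S has a minimum two-sided ideal: there exists a nonempty subset K ⊆ S with S·K ⊆ K and K·S ⊆ K such that K ⊆ I for every nonempty subset I ⊆ S satisfying S·I ⊆ I and I·S ⊆ I; moreover K is closed in S. -/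
/-- Every nonempty compact Hausdorff topological semigroup has a minimum two-sided
ideal, and this ideal is closed. -/
theorem compact_semigroup_minimum_ideal
    (S : Type) [Semigroup S] [Nonempty S] [TopologicalSpace S] [CompactSpace S]
    [T2Space S] (hmul : Continuous fun p : S × S => p.1 * p.2) :
    ∃ K : Set S, K.Nonempty ∧
      (∀ s : S, ∀ k ∈ K, s * k ∈ K ∧ k * s ∈ K) ∧
      (∀ I : Set S, I.Nonempty → (∀ s : S, ∀ x ∈ I, s * x ∈ I ∧ x * s ∈ I) → K ⊆ I) ∧
      IsClosed K := by
  classical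
  haveI : ContinuousMul S := ⟨hmul⟩
  set J : S → Set S := fun x => {y | ∃ u v : S, u * x * v = y} with hJ
  have hJcompact : ∀ x, IsCompact (J x) := by
    intro x
    have h : J x = (fun p : S × S => p.1 * x * p.2) '' Set.univ := by
      ext y
      simp [hJ, Set.mem_image]
    rw [h]
    exact isCompact_univ.image (by fun_prop)
  have hJclosed : ∀ x, IsClosed (J x) := fun x => (hJcompact x).isClosed
  -- each J x is a two-sided ideal
  have hJideal : ∀ x : S, ∀ s : S, ∀ k ∈ J x, s * k ∈ J x ∧ k * s ∈ J x := by
    rintro x s k ⟨u, v, rfl⟩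
    constructor
    · exact ⟨s * u, v, by simp [mul_assoc]⟩
    · exact ⟨u, v * s, by simp [mul_assoc]⟩
  -- finite intersections are nonempty
  have hfin : ∀ t : Finset S, (⋂ x ∈ t, J x).Nonempty := by
    intro t
    induction t using Finset.induction with
    | empty => simp only [Finset.notMem_empty, Set.iInter_of_empty, Set.iInter_univ]; exact (⟨Classical.arbitrary S, Set.mem_univ _⟩ : (Set.univ : Set S).Nonempty)
    | @insert a t ha ih =>
      obtain ⟨z, hz⟩ := ih
      refine ⟨z * a * z, ?_⟩
      simp only [Set.mem_iInter, Finset.mem_insert] at hz ⊢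
      rintro x (rfl | hx)
      · exact ⟨z, z, rfl⟩
      · exact (hJideal x z _ ((hJideal x a _ (hz x hx)).2)).2
  set K : Set S := ⋂ x : S, J x with hK
  have hKne : K.Nonempty := by
    by_contra h
    rw [Set.not_nonempty_iff_eq_empty] at h
    have hempty : (Set.univ : Set S) ∩ ⋂ x : S, J x = ∅ := by
      rw [Set.univ_inter]; exact h
    obtain ⟨t, ht⟩ := isCompact_univ.elim_finite_subfamily_closed J hJclosed hempty
    obtain ⟨z, hz⟩ := hfin t
    have : z ∈ (Set.univ : Set S) ∩ ⋂ x ∈ t, J x := ⟨Set.mem_univ _, hz⟩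
    rw [ht] at this
    exact this
  refine ⟨K, hKne, ?_, ?_, ?_⟩
  · intro s k hk
    constructor
    · exact Set.mem_iInter.mpr fun x => (hJideal x s k (Set.mem_iInter.mp hk x)).1
    · exact Set.mem_iInter.mpr fun x => (hJideal x s k (Set.mem_iInter.mp hk x)).2
  · rintro I ⟨x, hx⟩ hI y hy
    obtain ⟨u, v, rfl⟩ := Set.mem_iInter.mp hy x
    exact (hI v _ (hI u x hx).1).2
  · exact isClosed_iInter fun x => hJclosed x
end

section
/- Let S be a semigroup and let e, f ∈ S be idempotents lying in the same 𝒟-class of S. Then the maximal subgroups H_e and H_f are isomorphic as groups; here H_e (the ℋ-class of e) is a group under the multiplication of S with identity element e, and likewise for H_f. -/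
variable {S : Type} [Semigroup S]

/-- `a ≤_ℛ b` : `a = b` or `a = b·x` for some `x`. -/
def RPreorder (a b : S) : Prop := a = b ∨ ∃ x : S, a = b * x

/-- `a ≤_ℒ b` : `a = b` or `a = x·b` for some `x`. -/
def LPreorder (a b : S) : Prop := a = b ∨ ∃ x : S, a = x * b

/-- Green's relation `ℛ`. -/
def RRel (a b : S) : Prop := RPreorder a b ∧ RPreorder b a

/-- Green's relation `ℒ`. -/
def LRel (a b : S) : Prop := LPreorder a b ∧ LPreorder b a

/-- Green's relation `ℋ`. -/
def HRel (a b : S) : Prop := RRel a b ∧ LRel a b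

/-- Green's relation `𝒟`. -/
def DRel (a b : S) : Prop := ∃ c : S, RRel a c ∧ LRel c b

/-- The `ℋ`-class of an element. -/
def HClass (e : S) : Set S := {a : S | HRel a e}

/-- `K` is a group under the multiplication of `S`, with identity element `e`:
it contains `e`, is closed under multiplication, `e` is a two-sided identity on `K`,
and every element of `K` has a two-sided inverse in `K` relative to `e`. -/
def IsGroupWithIdentity (K : Set S) (e : S) : Prop :=
  e ∈ K ∧
  (∀ a ∈ K, ∀ b ∈ K, a * b ∈ K) ∧
  (∀ a ∈ K, a * e = a ∧ e * a = a) ∧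
  (∀ a ∈ K, ∃ b ∈ K, a * b = e ∧ b * a = e)

lemma left_id_of_mem {e x : S} (he : e * e = e) (hx : x ∈ HClass e) : e * x = x := by
  rcases hx.1.1 with h | ⟨u, hu⟩
  · rw [h, he]
  · rw [hu, ← mul_assoc, he]

lemma right_id_of_mem {e x : S} (he : e * e = e) (hx : x ∈ HClass e) : x * e = x := by
  rcases hx.2.1 with h | ⟨u, hu⟩
  · rw [h, he]
  · rw [hu, mul_assoc, he]

lemma inv_of_mem {e x : S} (he : e * e = e) (hx : x ∈ HClass e) :
    ∃ x' ∈ HClass e, x * x' = e ∧ x' * x = e := by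
  have hex : e * x = x := left_id_of_mem he hx
  have hxe : x * e = x := right_id_of_mem he hx
  obtain ⟨s, hs⟩ : ∃ s, x * s = e := by
    rcases hx.1.2 with h | ⟨s, hs⟩
    · exact ⟨x, by rw [← h, he]⟩
    · exact ⟨s, hs.symm⟩
  obtain ⟨t, ht⟩ : ∃ t, t * x = e := by
    rcases hx.2.2 with h | ⟨t, ht⟩
    · exact ⟨x, by rw [← h, he]⟩
    · exact ⟨t, ht.symm⟩
  set r := e * s * e with hr
  set l := e * t * e with hl
  have hxr : x * r = e := by rw [hr, ← mul_assoc, ← mul_assoc, hxe, hs, he]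
  have hlx : l * x = e := by rw [hl, mul_assoc, mul_assoc, hex, ht, he]
  have her : e * r = r := by rw [hr, ← mul_assoc, ← mul_assoc, he]
  have hle : l * e = l := by rw [hl, mul_assoc, mul_assoc, he, ← mul_assoc]
  have hlr : l = r := by
    rw [← hle, ← hxr, ← mul_assoc, hlx, her]
  refine ⟨r, ⟨⟨Or.inr ⟨s * e, by rw [hr, mul_assoc]⟩, Or.inr ⟨x, by rw [← hlr, hlx]⟩⟩,
    ⟨Or.inr ⟨e * s, hr⟩, Or.inr ⟨x, hxr.symm⟩⟩⟩, hxr, by rw [← hlr, hlx]⟩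

lemma group_of_idem {e : S} (he : e * e = e) : IsGroupWithIdentity (HClass e) e := by
  have heH : e ∈ HClass e :=
    ⟨⟨Or.inl rfl, Or.inl rfl⟩, ⟨Or.inl rfl, Or.inl rfl⟩⟩
  refine ⟨heH, ?_, fun a ha => ⟨right_id_of_mem he ha, left_id_of_mem he ha⟩,
    fun a ha => inv_of_mem he ha⟩
  intro a ha b hb
  obtain ⟨a', ha', haa', ha'a⟩ := inv_of_mem he ha
  obtain ⟨b', hb', hbb', hb'b⟩ := inv_of_mem he hb
  have hea : e * a = a := left_id_of_mem he ha
  have hea' : e * a' = a' := left_id_of_mem he ha'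
  have hbe : b * e = b := right_id_of_mem he hb
  have hae : a * e = a := right_id_of_mem he ha
  have hb'e : b' * e = b' := right_id_of_mem he hb'
  constructor
  constructor
  · exact Or.inr ⟨a * b, by rw [← mul_assoc, hea]⟩
  · refine Or.inr ⟨b' * a', ?_⟩
    have : a * b * (b' * a') = e := by
      rw [mul_assoc, ← mul_assoc b, hbb', hea', haa']
    rw [this]
  constructor
  · exact Or.inr ⟨a * b, by rw [mul_assoc, hbe]⟩
  · refine Or.inr ⟨b' * a', ?_⟩
    have : b' * a' * (a * b) = e := by
      rw [mul_assoc, ← mul_assoc a', ha'a, ← mul_assoc, hb'e, hb'b]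
    rw [this]

lemma sgrp_conj_mul {e a b : S} (h3 : a * b = e) {y z : S} (hy : y * e = y) :
    (b * y * a) * (b * z * a) = b * (y * z) * a := by
  rw [mul_assoc (b*y), ← mul_assoc a (b*z), ← mul_assoc a b, h3, mul_assoc b y,
    ← mul_assoc y (e*z), ← mul_assoc y e, hy, ← mul_assoc]

lemma conj_mem {e f a b : S} (he : e * e = e)
    (h1 : e * a = a) (h2 : a * f = a) (h3 : a * b = e) (h4 : b * a = f)
    (h5 : f * b = b) (h6 : b * e = b) :
    ∀ x ∈ HClass e, b * x * a ∈ HClass f := by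
  intro x hx
  obtain ⟨x', hx', hxx', hx'x⟩ := inv_of_mem he hx
  have hxe : x * e = x := right_id_of_mem he hx
  have hx'e : x' * e = x' := right_id_of_mem he hx'
  have keyf : (b * x * a) * (b * x' * a) = f := by
    rw [sgrp_conj_mul h3 hxe, hxx', mul_assoc, h1, h4]
  have keyf' : (b * x' * a) * (b * x * a) = f := by
    rw [sgrp_conj_mul h3 hx'e, hx'x, mul_assoc, h1, h4]
  have hR : f * (b * x * a) = b * x * a := by rw [← mul_assoc, ← mul_assoc, h5]
  have hL : (b * x * a) * f = b * x * a := by rw [mul_assoc (b*x), h2]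
  exact ⟨⟨Or.inr ⟨b * x * a, hR.symm⟩, Or.inr ⟨b * x' * a, keyf.symm⟩⟩,
    ⟨Or.inr ⟨b * x * a, hL.symm⟩, Or.inr ⟨b * x' * a, keyf'.symm⟩⟩⟩

/-- If `e` and `f` are idempotents in the same `𝒟`-class of a semigroup `S`, then the
maximal subgroups `H_e` and `H_f` (which are groups under the multiplication of `S`
with identities `e` and `f` respectively) are isomorphic as groups: there is a
bijection from `H_e` onto `H_f` preserving multiplication. -/
theorem maximal_subgroups_isomorphic (e f : S)
    (he : e * e = e) (hf : f * f = f) (hD : DRel e f) :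
    IsGroupWithIdentity (HClass e) e ∧
    IsGroupWithIdentity (HClass f) f ∧
    ∃ φ : S → S, Set.BijOn φ (HClass e) (HClass f) ∧
      ∀ a ∈ HClass e, ∀ b ∈ HClass e, φ (a * b) = φ a * φ b := by
  obtain ⟨c, hec, hcf⟩ := hD
  have hEc : e * c = c := by
    rcases hec.2 with h | ⟨u, hu⟩
    · rw [h, he]
    · rw [hu, ← mul_assoc, he]
  obtain ⟨v, hv⟩ : ∃ v, c * v = e := by
    rcases hec.1 with h | ⟨v, hv⟩
    · exact ⟨c, by rw [← h, he]⟩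
    · exact ⟨v, hv.symm⟩
  have hcF : c * f = c := by
    rcases hcf.1 with h | ⟨p, hp⟩
    · rw [h, hf]
    · rw [hp, mul_assoc, hf]
  obtain ⟨q, hq⟩ : ∃ q, q * c = f := by
    rcases hcf.2 with h | ⟨q, hq⟩
    · exact ⟨c, by rw [← h, hf]⟩
    · exact ⟨q, hq.symm⟩
  set b := f * q * e with hb
  have h3 : c * b = e := by
    rw [hb, ← mul_assoc, ← mul_assoc, hcF, ← hv, ← mul_assoc, mul_assoc c q, hq, hcF]
  have h4 : b * c = f := by
    rw [hb, mul_assoc, hEc, mul_assoc, hq, hf]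
  have h5 : f * b = b := by rw [hb, ← mul_assoc, ← mul_assoc, hf]
  have h6 : b * e = b := by rw [hb, mul_assoc, he]
  have hmapsE : ∀ x ∈ HClass e, b * x * c ∈ HClass f :=
    conj_mem he hEc hcF h3 h4 h5 h6
  have hmapsF : ∀ y ∈ HClass f, c * y * b ∈ HClass e :=
    conj_mem hf h5 h6 h4 h3 hEc hcF
  have hretrE : ∀ x ∈ HClass e, c * (b * x * c) * b = x := by
    intro x hx
    have hex := left_id_of_mem he hx
    have hxe := right_id_of_mem he hx
    rw [← mul_assoc c (b*x), ← mul_assoc c b, h3, hex, mul_assoc, h3, hxe]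
  have hretrF : ∀ y ∈ HClass f, b * (c * y * b) * c = y := by
    intro y hy
    have hfy := left_id_of_mem hf hy
    have hyf := right_id_of_mem hf hy
    rw [← mul_assoc b (c*y), ← mul_assoc b c, h4, hfy, mul_assoc, h4, hyf]
  refine ⟨group_of_idem he, group_of_idem hf, fun x => b * x * c, ⟨?_, ?_, ?_⟩, ?_⟩
  · intro x hx
    exact hmapsE x hx
  · intro x hx y hy hxy
    have h' : b * x * c = b * y * c := hxy
    rw [← hretrE x hx, ← hretrE y hy, h']
  · intro y hy
    exact ⟨c * y * b, hmapsF y hy, hretrF y hy⟩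
  · intro x hx y hy
    exact (sgrp_conj_mul h3 (right_id_of_mem he hx)).symm
end
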